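/- Let E be a finite-dimensional vector space over ℚ, let Δ be a finite subset of E with 0 ∉ Δ and Δ ∩ (−Δ) = ∅, set ρ₁ = (1/2)·Σ_{α∈Δ} α, and for a subset Z ⊆ Δ define integers K_Z(γ) for γ ∈ E by the expansion ∏_{α∈Δ∖Z} (1 + e^{−α}) = Σ_{γ∈E} K_Z(γ) e^{−γ} in the group algebra ℤ[E]. Let w be a linear automorphism of E with w(Δ ∪ (−Δ)) = Δ ∪ (−Δ) and let Z ⊆ Δ satisfy w(Z) ⊆ Δ. Then for every γ ∈ E, K_{wZ}(ρ₁ − w(ρ₁ − γ)) = K_Z(γ). -/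

import Mathlib

open scoped BigOperators

/-- Let `Δ` be a finite subset of a finite-dimensional `ℚ`-vector space `E` with `0 ∉ Δ` and
`Δ ∩ (−Δ) = ∅`, let `ρ₁` be half the sum of the elements of `Δ`, and for `Z ⊆ Δ` let
`K_Z : E → ℤ` (finitely supported) be defined by the expansion
`∏_{α ∈ Δ∖Z} (1 + e^{−α}) = Σ_γ K_Z(γ) e^{−γ}` in the group algebra `ℤ[E]`.  If `w` is a
linear automorphism of `E` preserving `Δ ∪ (−Δ)` and `w(Z) ⊆ Δ`, then for every `γ ∈ E`,
`K_{wZ}(ρ₁ − w(ρ₁ − γ)) = K_Z(γ)`. -/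
theorem K_wZ_star_eq_K_Z
    {E : Type*} [AddCommGroup E] [Module ℚ E] [FiniteDimensional ℚ E] [DecidableEq E]
    (Δ : Finset E) (hΔ0 : (0 : E) ∉ Δ) (hΔ : (↑Δ : Set E) ∩ (-(↑Δ : Set E)) = ∅)
    (ρ₁ : E) (hρ₁ : ρ₁ = (1 / 2 : ℚ) • ∑ α ∈ Δ, α)
    (w : E ≃ₗ[ℚ] E)
    (hw : w '' ((↑Δ : Set E) ∪ (-(↑Δ : Set E))) = (↑Δ : Set E) ∪ (-(↑Δ : Set E)))
    (Z : Finset E) (hZ : Z ⊆ Δ) (hwZ : Z.image w ⊆ Δ)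
    (KZ KwZ : E →₀ ℤ)
    (hKZ : (∏ α ∈ Δ \ Z, (1 + AddMonoidAlgebra.single (-α) (1 : ℤ))) =
      KZ.sum fun γ c => AddMonoidAlgebra.single (-γ) c)
    (hKwZ : (∏ α ∈ Δ \ Z.image w, (1 + AddMonoidAlgebra.single (-α) (1 : ℤ))) =
      KwZ.sum fun γ c => AddMonoidAlgebra.single (-γ) c) :
    ∀ γ : E, KwZ (ρ₁ - w (ρ₁ - γ)) = KZ γ := by
  classical
  -- disjointness of Δ and -Δ
  have hd : ∀ a : E, a ∈ Δ → -a ∈ Δ → False := by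
    intro a ha hna
    have : a ∈ (↑Δ : Set E) ∩ (-(↑Δ : Set E)) := ⟨ha, by simpa using hna⟩
    rw [hΔ] at this; exact this
  -- stability of Δ ∪ -Δ
  have hfwd : ∀ x : E, (x ∈ Δ ∨ -x ∈ Δ) → (w x ∈ Δ ∨ -(w x) ∈ Δ) := by
    intro x hx
    have hx' : x ∈ (↑Δ : Set E) ∪ (-(↑Δ : Set E)) := by
      rcases hx with h | h
      · exact Or.inl h
      · exact Or.inr (by simpa using h)
    have : w x ∈ (↑Δ : Set E) ∪ (-(↑Δ : Set E)) := by
      rw [← hw]; exact Set.mem_image_of_mem _ hx'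
    rcases this with h | h
    · exact Or.inl h
    · exact Or.inr (by simpa using h)
  have hbwd : ∀ y : E, (y ∈ Δ ∨ -y ∈ Δ) → (w.symm y ∈ Δ ∨ -(w.symm y) ∈ Δ) := by
    intro y hy
    have hy' : y ∈ (↑Δ : Set E) ∪ (-(↑Δ : Set E)) := by
      rcases hy with h | h
      · exact Or.inl h
      · exact Or.inr (by simpa using h)
    rw [← hw] at hy'
    obtain ⟨x, hx, hxy⟩ := hy'
    have hxs : w.symm y = x := by rw [← hxy]; simp
    rcases hx with h | h
    · exact Or.inl (by rw [hxs]; exact h)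
    · exact Or.inr (by rw [hxs]; simpa using h)
  set A : Finset E := (Δ \ Z).filter (fun α => w α ∈ Δ) with hA
  set B : Finset E := (Δ \ Z).filter (fun α => w α ∉ Δ) with hBdef
  have hB : ∀ β ∈ B, -(w β) ∈ Δ := by
    intro β hβ
    rw [hBdef, Finset.mem_filter, Finset.mem_sdiff] at hβ
    rcases hfwd β (Or.inl hβ.1.1) with h | h
    · exact absurd h hβ.2
    · exact h
  have hABdisj : Disjoint A B := by
    rw [hA, hBdef]; exact Finset.disjoint_filter_filter_not _ _ _
  have hAB : A ∪ B = Δ \ Z := by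
    rw [hA, hBdef]; exact Finset.filter_union_filter_not_eq ..
  have hwinj : Function.Injective w := w.injective
  have hnwinj : Function.Injective (fun β : E => -(w β)) := by
    intro a b h; exact hwinj (neg_injective h)
  -- the partition of Δ \ wZ
  have hpart : Δ \ Z.image w = A.image w ∪ B.image (fun β => -(w β)) := by
    ext δ
    constructor
    · intro hδ
      rw [Finset.mem_sdiff] at hδ
      rcases hbwd δ (Or.inl hδ.1) with h | h
      · have hzn : w.symm δ ∉ Z := by
          intro hz
          exact hδ.2 (Finset.mem_image.2 ⟨w.symm δ, hz, by simp⟩)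
        have : w.symm δ ∈ A := by
          rw [hA, Finset.mem_filter, Finset.mem_sdiff]
          exact ⟨⟨h, hzn⟩, by simpa using hδ.1⟩
        exact Finset.mem_union_left _ (Finset.mem_image.2 ⟨_, this, by simp⟩)
      · set β := -(w.symm δ) with hβ
        have hwβ : w β = -δ := by rw [hβ]; simp
        have hβΔ : β ∈ Δ := h
        have hβZ : β ∉ Z := by
          intro hz
          have : w β ∈ Δ := hwZ (Finset.mem_image.2 ⟨β, hz, rfl⟩)
          rw [hwβ] at this
          exact hd δ hδ.1 this
        have hβB : β ∈ B := by
          rw [hBdef, Finset.mem_filter, Finset.mem_sdiff]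
          refine ⟨⟨hβΔ, hβZ⟩, ?_⟩
          rw [hwβ]; intro hc; exact hd δ hδ.1 hc
        refine Finset.mem_union_right _ (Finset.mem_image.2 ⟨β, hβB, ?_⟩)
        rw [hwβ]; simp
    · intro hδ
      rcases Finset.mem_union.1 hδ with h | h
      · obtain ⟨α, hα, rfl⟩ := Finset.mem_image.1 h
        rw [hA, Finset.mem_filter, Finset.mem_sdiff] at hα
        rw [Finset.mem_sdiff]
        refine ⟨hα.2, ?_⟩
        intro hc
        obtain ⟨ζ, hζ, hζe⟩ := Finset.mem_image.1 hc
        exact hα.1.2 (hwinj hζe ▸ hζ)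
      · obtain ⟨β, hβ, rfl⟩ := Finset.mem_image.1 h
        rw [Finset.mem_sdiff]
        refine ⟨hB β hβ, ?_⟩
        intro hc
        obtain ⟨ζ, hζ, hζe⟩ := Finset.mem_image.1 hc
        have : w ζ = w (-β) := by rw [hζe]; simp
        have hζβ : ζ = -β := hwinj this
        rw [hBdef, Finset.mem_filter, Finset.mem_sdiff] at hβ
        exact hd ζ (hZ hζ) (by rw [hζβ]; simpa using hβ.1.1)
  have hdisj2 : Disjoint (A.image w) (B.image (fun β => -(w β))) := by
    rw [Finset.disjoint_left]
    intro x hx hx'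
    obtain ⟨α, hα, rfl⟩ := Finset.mem_image.1 hx
    obtain ⟨β, hβ, hβe⟩ := Finset.mem_image.1 hx'
    rw [hA, Finset.mem_filter, Finset.mem_sdiff] at hα
    rw [hBdef, Finset.mem_filter, Finset.mem_sdiff] at hβ
    have : β = -α := hwinj (by rw [map_neg]; rw [← hβe]; simp)
    exact hd α hα.1.1 (by rw [← this]; exact hβ.1.1)
  set σ : E := ∑ β ∈ B, w β with hσdef
  -- the shift σ equals w ρ₁ - ρ₁
  have hZA : Disjoint Z (A ∪ B) := by
    rw [hAB]; exact Finset.disjoint_sdiff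
  have hZAB : Z ∪ (A ∪ B) = Δ := by rw [hAB]; exact Finset.union_sdiff_of_subset hZ
  have hsum1 : ∑ α ∈ Δ, α = ∑ ζ ∈ Z, ζ + (∑ α ∈ A, α + ∑ β ∈ B, β) := by
    rw [← hZAB, Finset.sum_union hZA, Finset.sum_union hABdisj]
  have hZwdisj : Disjoint (Z.image w) (A.image w ∪ B.image (fun β => -(w β))) := by
    rw [← hpart]; exact Finset.disjoint_sdiff
  have hZwAB : Z.image w ∪ (A.image w ∪ B.image (fun β => -(w β))) = Δ := by
    rw [← hpart]; exact Finset.union_sdiff_of_subset hwZ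
  have hsum2 : ∑ α ∈ Δ, α =
      ∑ ζ ∈ Z, w ζ + (∑ α ∈ A, w α + ∑ β ∈ B, -(w β)) := by
    rw [← hZwAB, Finset.sum_union hZwdisj, Finset.sum_union hdisj2,
      Finset.sum_image (fun a _ b _ h => hwinj h),
      Finset.sum_image (fun a _ b _ h => hwinj h),
      Finset.sum_image (fun a _ b _ h => hnwinj h)]
  have hwsum : w (∑ α ∈ Δ, α) = ∑ ζ ∈ Z, w ζ + (∑ α ∈ A, w α + ∑ β ∈ B, w β) := by
    rw [hsum1]; simp [map_add, map_sum]
  have hσ : σ = w ρ₁ - ρ₁ := by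
    have h2 : w (∑ α ∈ Δ, α) - ∑ α ∈ Δ, α = σ + σ := by
      rw [hwsum]
      nth_rewrite 1 [hsum2]
      rw [hσdef, Finset.sum_neg_distrib]
      abel
    rw [hρ₁, map_smul, ← smul_sub, h2]
    rw [smul_add]
    rw [← add_smul]
    norm_num
  -- the ring homomorphism induced by w
  set φ : AddMonoidAlgebra ℤ E →+* AddMonoidAlgebra ℤ E :=
    AddMonoidAlgebra.mapDomainRingHom ℤ (w.toLinearMap.toAddMonoidHom) with hφ
  have hφsingle : ∀ (a : E) (c : ℤ), φ (AddMonoidAlgebra.single a c)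
      = AddMonoidAlgebra.single (w a) c := by
    intro a c
    rw [hφ]
    exact AddMonoidAlgebra.mapDomain_single
  have eq1 : φ (∏ α ∈ Δ \ Z, (1 + AddMonoidAlgebra.single (-α) (1 : ℤ)))
      = ∏ α ∈ Δ \ Z, (1 + AddMonoidAlgebra.single (-(w α)) (1 : ℤ)) := by
    rw [map_prod]
    refine Finset.prod_congr rfl fun α _ => ?_
    rw [map_add, map_one, hφsingle, map_neg]
  have eq2 : φ (KZ.sum fun γ c => AddMonoidAlgebra.single (-γ) c)
      = KZ.sum fun γ c => AddMonoidAlgebra.single (-(w γ)) c := by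
    rw [map_finsuppSum]
    refine Finsupp.sum_congr fun γ _ => ?_
    rw [hφsingle, map_neg]
  -- single of a sum is a product of singles
  have hsingle_prod : ∀ (s : Finset E) (f : E → E),
      AddMonoidAlgebra.single (∑ x ∈ s, f x) (1 : ℤ) = ∏ x ∈ s, AddMonoidAlgebra.single (f x) 1 := by
    intro s f
    induction s using Finset.induction_on with
    | empty => simp [AddMonoidAlgebra.one_def]
    | insert _ _ h ih =>
      rw [Finset.sum_insert h, Finset.prod_insert h, ← ih,
        AddMonoidAlgebra.single_mul_single, one_mul]
  -- the key product identity
  have hprod : AddMonoidAlgebra.single σ (1 : ℤ) *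
      ∏ α ∈ Δ \ Z, (1 + AddMonoidAlgebra.single (-(w α)) (1 : ℤ))
      = ∏ α ∈ Δ \ Z.image w, (1 + AddMonoidAlgebra.single (-α) (1 : ℤ)) := by
    have hBprod : ∀ β ∈ B, AddMonoidAlgebra.single (w β) (1:ℤ) *
        (1 + AddMonoidAlgebra.single (-(w β)) 1)
        = 1 + AddMonoidAlgebra.single (w β) 1 := by
      intro β _
      rw [mul_add, mul_one, AddMonoidAlgebra.single_mul_single]
      simp [AddMonoidAlgebra.one_def, add_comm]
    have step : AddMonoidAlgebra.single σ (1:ℤ) *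
        ∏ β ∈ B, (1 + AddMonoidAlgebra.single (-(w β)) (1:ℤ))
        = ∏ β ∈ B, (1 + AddMonoidAlgebra.single (w β) (1:ℤ)) := by
      rw [hσdef, hsingle_prod B (fun β => w β), ← Finset.prod_mul_distrib]
      exact Finset.prod_congr rfl hBprod
    rw [← hAB, Finset.prod_union hABdisj, mul_left_comm, step]
    rw [hpart, Finset.prod_union hdisj2,
      Finset.prod_image (fun a _ b _ h => hwinj h),
      Finset.prod_image (fun a _ b _ h => hnwinj h)]
    simp
  -- put everything together
  have main : Finsupp.mapDomain (fun γ => σ - w γ) KZ = Finsupp.mapDomain (Neg.neg) KwZ := by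
    have h1 : AddMonoidAlgebra.single σ (1:ℤ) *
        (KZ.sum fun γ c => AddMonoidAlgebra.single (-(w γ)) c)
        = KwZ.sum fun γ c => AddMonoidAlgebra.single (-γ) c := by
      rw [← eq2, ← hKZ, eq1, hprod, hKwZ]
    have h2 : AddMonoidAlgebra.single σ (1:ℤ) *
        (KZ.sum fun γ c => AddMonoidAlgebra.single (-(w γ)) c)
        = KZ.sum fun γ c => AddMonoidAlgebra.single (σ - w γ) c := by
      rw [Finsupp.sum, Finsupp.sum, Finset.mul_sum]
      refine Finset.sum_congr rfl fun γ _ => ?_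
      rw [AddMonoidAlgebra.single_mul_single, one_mul, ← sub_eq_add_neg]
    rw [Finsupp.mapDomain, Finsupp.mapDomain]
    have h3 := congrArg AddMonoidAlgebra.coeff (h1.symm.trans h2)
    simp only [AddMonoidAlgebra.coeff_finsuppSum, AddMonoidAlgebra.coeff_single] at h3
    exact h3.symm
  intro γ₀
  have hkey : ρ₁ - w (ρ₁ - γ₀) = w γ₀ - σ := by
    rw [hσ, map_sub]; abel
  have hinj : Function.Injective (fun γ : E => σ - w γ) := by
    intro a b h
    simp only [sub_eq_add_neg] at h
    exact hwinj (neg_injective (add_left_cancel h))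
  calc KwZ (ρ₁ - w (ρ₁ - γ₀)) = KwZ (w γ₀ - σ) := by rw [hkey]
    _ = Finsupp.mapDomain (Neg.neg) KwZ (-(w γ₀ - σ)) :=
        (Finsupp.mapDomain_apply neg_injective _ _).symm
    _ = Finsupp.mapDomain (fun γ => σ - w γ) KZ (σ - w γ₀) := by
        rw [main, neg_sub]
    _ = KZ γ₀ := Finsupp.mapDomain_apply hinj _ _
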